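/- Let F be the global map of ECA rule 184 and take the symmetric Bernoulli initial measure μ_{1/2}. Then for every n ≥ 0: P_n(0) = 1/2; P_n(00) = 2^{−2−2n}·C(2n+1, n+1); P_n(000) = 2^{−2n−3}·C(2n+1, n+1); and P_n(010) = 1/2 − 3·2^{−3−2n}·C(2n+1, n+1), where C(·,·) denotes the binomial coefficient. -/

import Mathlib

open MeasureTheory

/-- The cylinder set generated by the binary word `b` (anchored at `0`). -/
def cylinder (b : List Bool) : Set (ℤ → Bool) :=
  {x | ∀ j : Fin b.length, x (j.val : ℤ) = b.get j}

/-- The global map of the elementary cellular automaton with local rule `f`. -/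
def eca (f : Bool → Bool → Bool → Bool) (x : ℤ → Bool) : ℤ → Bool :=
  fun i => f (x (i - 1)) (x i) (x (i + 1))

/-- The local rule of ECA rule 184: `f(x1,x2,x3) = x1` if `x2 = 0`, and `x3` if `x2 = 1`. -/
def rule184 (x1 x2 x3 : Bool) : Bool := if x2 then x3 else x1

/-- `μ` is the Bernoulli (i.i.d. product) measure with parameter `p`. -/
def IsBernoulli (p : ℝ) (μ : Measure (ℤ → Bool)) : Prop :=
  ∀ (s : Finset ℤ) (f : ℤ → Bool),
    μ {x | ∀ i ∈ s, x i = f i} =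
      ∏ i ∈ s, (if f i then ENNReal.ofReal p else ENNReal.ofReal (1 - p))

/-! ### Height function -/

def sg (b : Bool) : ℤ := if b then -1 else 1

noncomputable def SS (x : ℤ → Bool) (i : ℤ) : ℤ :=
  ∑ t ∈ Finset.Ioc 0 i, sg (x t) - ∑ t ∈ Finset.Ioc i 0, sg (x t)

lemma SS_zero (x : ℤ → Bool) : SS x 0 = 0 := by simp [SS]

lemma SS_step (x : ℤ → Bool) (i : ℤ) : SS x i = SS x (i - 1) + sg (x i) := by
  rcases le_or_gt i 0 with h | h
  · have h1 : Finset.Ioc (0:ℤ) i = ∅ := by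
      apply Finset.Ioc_eq_empty; omega
    have h2 : Finset.Ioc (0:ℤ) (i-1) = ∅ := by
      apply Finset.Ioc_eq_empty; omega
    have h3 : Finset.Ioc (i-1) 0 = insert i (Finset.Ioc i 0) := by
      ext t; simp only [Finset.mem_Ioc, Finset.mem_insert]; omega
    rw [SS, SS, h1, h2, h3, Finset.sum_insert (by simp)]
    ring
  · have h1 : Finset.Ioc i (0:ℤ) = ∅ := by
      apply Finset.Ioc_eq_empty; omega
    have h2 : Finset.Ioc (i-1) (0:ℤ) = ∅ := by
      apply Finset.Ioc_eq_empty; omega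
    have h3 : Finset.Ioc (0:ℤ) i = insert i (Finset.Ioc 0 (i-1)) := by
      ext t; simp only [Finset.mem_Ioc, Finset.mem_insert]; omega
    rw [SS, SS, h1, h2, h3, Finset.sum_insert (by simp)]
    ring

lemma onestep (x : ℤ → Bool) (i : ℤ) :
    sg (eca rule184 x i) =
      min (SS x (i-1)) (SS x (i+1)) - min (SS x (i-2)) (SS x i) := by
  have e1 : SS x (i-1) = SS x (i-2) + sg (x (i-1)) := by
    have := SS_step x (i-1); rw [show i-1-1 = i-2 by ring] at this; exact this
  have e2 : SS x i = SS x (i-1) + sg (x i) := SS_step x i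
  have e3 : SS x (i+1) = SS x i + sg (x (i+1)) := by
    have := SS_step x (i+1); rw [show i+1-1 = i by ring] at this; exact this
  have he : eca rule184 x i = rule184 (x (i-1)) (x i) (x (i+1)) := rfl
  rw [he, e3, e2, e1]
  cases hx1 : x (i-1) <;> cases hx2 : x i <;> cases hx3 : x (i+1) <;>
    simp only [rule184, sg, Bool.false_eq_true, if_false, if_true] <;>
    simp only [min_def] <;> split_ifs <;> omega

lemma SS_eca (x : ℤ → Bool) (i : ℤ) :
    SS (eca rule184 x) i =
      min (SS x (i-1)) (SS x (i+1)) - min (SS x (-1)) (SS x 1) := by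
  induction i using Int.induction_on with
  | zero => rw [SS_zero]; norm_num
  | succ k ih =>
      have h := SS_step (eca rule184 x) (k+1)
      rw [show (k:ℤ)+1-1 = k by ring] at h
      have ho := onestep x (k+1)
      rw [show (k:ℤ)+1-1 = k by ring, show (k:ℤ)+1+1 = k+2 by ring,
        show (k:ℤ)+1-2 = k-1 by ring] at ho
      rw [h, ih, ho, show (k:ℤ)+1+1 = k+2 by ring]
      ring
  | pred k ih =>
      have h := SS_step (eca rule184 x) (-(k:ℤ))
      rw [show -(k:ℤ)-1 = -k-1 by ring] at h
      have ho := onestep x (-(k:ℤ))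
      rw [show -(k:ℤ)-1-1 = -k-2 by ring, show -(k:ℤ)-1+1 = -k by ring]
      omega

/-! ### Min over window -/

noncomputable def MM (n : ℕ) (x : ℤ → Bool) (c : ℤ) : ℤ :=
  (Finset.range (n+1)).inf' (Finset.nonempty_range_iff.mpr (Nat.succ_ne_zero n))
    (fun j => SS x (c + 2*j))

lemma inf'_add_const {α : Type*} (s : Finset α) (hs : s.Nonempty) (K : ℤ) (f : α → ℤ) :
    s.inf' hs (fun a => K + f a) = K + s.inf' hs f := by
  apply le_antisymm
  · obtain ⟨a, ha, h⟩ := Finset.exists_mem_eq_inf' hs f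
    calc s.inf' hs (fun a => K + f a) ≤ K + f a := Finset.inf'_le _ ha
    _ = K + s.inf' hs f := by rw [h]
  · apply Finset.le_inf'
    intro b hb
    have := Finset.inf'_le f hb
    omega

lemma min_tele (n : ℕ) (f : ℕ → ℤ) :
    (Finset.range (n+1)).inf' (Finset.nonempty_range_iff.mpr (Nat.succ_ne_zero n))
      (fun j => min (f j) (f (j+1)))
    = (Finset.range (n+2)).inf' (Finset.nonempty_range_iff.mpr (Nat.succ_ne_zero (n+1))) f := by
  apply le_antisymm
  · apply Finset.le_inf'
    intro j hj
    rw [Finset.mem_range] at hj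
    by_cases hle : j ≤ n
    · calc _ ≤ min (f j) (f (j+1)) :=
            Finset.inf'_le _ (Finset.mem_range.mpr (by omega))
      _ ≤ f j := min_le_left _ _
    · have hj' : j = n + 1 := by omega
      calc _ ≤ min (f n) (f (n+1)) :=
            Finset.inf'_le _ (Finset.mem_range.mpr (by omega))
      _ ≤ f j := by rw [hj']; exact min_le_right _ _
  · apply Finset.le_inf'
    intro j hj
    rw [Finset.mem_range] at hj
    apply le_min
    · exact Finset.inf'_le _ (Finset.mem_range.mpr (by omega))
    · exact Finset.inf'_le _ (Finset.mem_range.mpr (by omega))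

lemma MM_eca (n : ℕ) (x : ℤ → Bool) (c : ℤ) :
    MM n (eca rule184 x) c = MM (n+1) x (c-1) - min (SS x (-1)) (SS x 1) := by
  set K := min (SS x (-1)) (SS x 1) with hK
  set g : ℕ → ℤ := fun j => SS x ((c-1) + 2*(j:ℤ)) with hg
  have h1 : MM n (eca rule184 x) c
      = (Finset.range (n+1)).inf' (Finset.nonempty_range_iff.mpr (Nat.succ_ne_zero n))
        (fun j => (-K) + min (g j) (g (j+1))) := by
    refine Finset.inf'_congr _ rfl ?_
    intro j _
    rw [SS_eca]
    rw [show c + 2*(j:ℤ) - 1 = (c-1) + 2*(j:ℤ) by ring,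
      show c + 2*(j:ℤ) + 1 = (c-1) + 2*((j:ℤ)+1) by ring]
    have : ((j+1 : ℕ) : ℤ) = (j:ℤ)+1 := by push_cast; ring
    rw [hg]
    simp only [this]
    ring
  rw [h1, inf'_add_const, min_tele n g]
  have h2 : MM (n+1) x (c-1)
      = (Finset.range (n+2)).inf' (Finset.nonempty_range_iff.mpr (Nat.succ_ne_zero (n+1))) g := rfl
  rw [h2]
  ring

lemma MM_zero (x : ℤ → Bool) (c : ℤ) : MM 0 x c = SS x c := by
  simp [MM, Finset.range_one]

lemma KL (n : ℕ) : ∀ (x : ℤ → Bool) (k : ℤ),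
    sg ((eca rule184)^[n] x k) = MM n x (k - n) - MM n x (k - n - 1) := by
  induction n with
  | zero =>
      intro x k
      simp only [Function.iterate_zero, id_eq, MM_zero, Nat.cast_zero, sub_zero]
      have := SS_step x k
      omega
  | succ n ih =>
      intro x k
      rw [Function.iterate_succ_apply, ih (eca rule184 x) k, MM_eca, MM_eca]
      have eA : k - ((n:ℕ):ℤ) - 1 = k - (((n+1:ℕ)):ℤ) := by push_cast; ring
      rw [eA]
      ring

/-! ### Finite words, prefix sums -/

attribute [local instance] Classical.propDecidable

def emb (n : ℕ) (v : Fin (2*n+3) → Bool) : ℤ → Bool :=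
  fun i => if h : 0 ≤ i + n ∧ i + n < 2*n+3 then
    v ⟨(i + n).toNat, by omega⟩ else false

def vex {M : ℕ} (v : Fin M → Bool) : ℕ → Bool :=
  fun t => if h : t < M then v ⟨t, h⟩ else false

def ps {M : ℕ} (v : Fin M → Bool) (t : ℕ) : ℤ :=
  ∑ j ∈ Finset.range t, sg (vex v j)

def qm {M : ℕ} (n : ℕ) (v : Fin M → Bool) (c : ℕ) : ℤ :=
  (Finset.range (n+1)).inf' (Finset.nonempty_range_iff.mpr (Nat.succ_ne_zero n))
    (fun j => ps v (c + 2*j))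

lemma ps_zero {M : ℕ} (v : Fin M → Bool) : ps v 0 = 0 := by simp [ps]

lemma ps_step {M : ℕ} (v : Fin M → Bool) (t : ℕ) :
    ps v (t+1) = ps v t + sg (vex v t) := Finset.sum_range_succ _ _

lemma sg_cases (b : Bool) : sg b = 1 ∨ sg b = -1 := by cases b <;> simp [sg]

lemma ps_parity {M : ℕ} (v : Fin M → Bool) : ∀ t, (2:ℤ) ∣ (ps v t + t) := by
  intro t
  induction t with
  | zero => simp [ps_zero]
  | succ t ih =>
      rw [ps_step]
      rcases sg_cases (vex v t) with h | h <;> rw [h] <;> push_cast <;> omega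

lemma emb_val (n : ℕ) (v : Fin (2*n+3) → Bool) (t : ℕ) (ht : t < 2*n+3) :
    emb n v (-(n:ℤ) + t) = v ⟨t, ht⟩ := by
  have h : (0 ≤ -(n:ℤ) + t + n ∧ -(n:ℤ) + t + n < 2*n+3) := by
    constructor <;> push_cast <;> omega
  rw [emb, dif_pos h]
  congr 1
  apply Fin.ext
  simp only
  omega

lemma SS_emb (n : ℕ) (v : Fin (2*n+3) → Bool) :
    ∀ t : ℕ, t ≤ 2*n+3 →
      SS (emb n v) (-(n:ℤ) - 1 + t) = SS (emb n v) (-(n:ℤ) - 1) + ps v t := by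
  intro t
  induction t with
  | zero => intro _; simp [ps_zero]
  | succ t ih =>
      intro ht
      have ht' : t < 2*n+3 := by omega
      have h1 := SS_step (emb n v) (-(n:ℤ) - 1 + t + 1)
      rw [show -(n:ℤ) - 1 + t + 1 - 1 = -(n:ℤ) - 1 + t by ring] at h1
      have h2 : emb n v (-(n:ℤ) - 1 + t + 1) = vex v t := by
        rw [show -(n:ℤ) - 1 + t + 1 = -(n:ℤ) + t by ring]
        rw [emb_val n v t ht', vex, dif_pos ht']
      rw [show ((t:ℕ)+1 : ℕ) = t+1 from rfl, ps_step]
      push_cast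
      rw [show -(n:ℤ) - 1 + ((t:ℤ) + 1) = -(n:ℤ) - 1 + t + 1 by ring, h1, h2, ih (by omega)]
      ring

lemma MM_emb (n : ℕ) (v : Fin (2*n+3) → Bool) (c : ℕ) (hc : c ≤ 3) :
    MM n (emb n v) ((c:ℤ) - n - 1) = SS (emb n v) (-(n:ℤ) - 1) + qm n v c := by
  rw [MM, qm, ← inf'_add_const]
  refine Finset.inf'_congr _ rfl ?_
  intro j hj
  rw [Finset.mem_range] at hj
  have h := SS_emb n v (c + 2*j) (by omega)
  rw [show (c:ℤ) - n - 1 + 2*(j:ℤ) = -(n:ℤ) - 1 + (↑(c + 2*j):ℤ) by push_cast; ring, h]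

lemma sg_inj (a b : Bool) : sg a = sg b ↔ a = b := by
  cases a <;> cases b <;> simp [sg]

/-- Translation: output value of the cellular automaton in terms of walk minima. -/
lemma out_iff (n : ℕ) (v : Fin (2*n+3) → Bool) (k : ℕ) (hk : k ≤ 2) (bb : Bool) :
    ((eca rule184)^[n] (emb n v) k = bb) ↔ qm n v (k+1) - qm n v k = sg bb := by
  have hKL := KL n (emb n v) k
  rw [MM_emb n v k (by omega)] at hKL
  rw [show ((k:ℤ) - n) = ((k+1:ℕ):ℤ) - n - 1 by push_cast; ring] at hKL
  rw [MM_emb n v (k+1) (by omega)] at hKL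
  constructor
  · intro h; rw [h] at hKL; omega
  · intro h
    rw [← sg_inj]
    omega

/-- The difference of consecutive window minima is `±1`. -/
lemma dq_pm (n : ℕ) (v : Fin (2*n+3) → Bool) (k : ℕ) (hk : k ≤ 2) :
    qm n v (k+1) - qm n v k = 1 ∨ qm n v (k+1) - qm n v k = -1 := by
  have h := (out_iff n v k hk ((eca rule184)^[n] (emb n v) k)).mp rfl
  rw [h]
  exact sg_cases _
/-! ### Counting toolbox (via `Nat.card` of subtypes) -/

lemma vex_lt {M : ℕ} (v : Fin M → Bool) (j : ℕ) (h : j < M) :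
    vex v j = v ⟨j, h⟩ := dif_pos h

lemma vex_tail {M : ℕ} (v : Fin (M+1) → Bool) (j : ℕ) :
    vex (Fin.tail v) j = vex v (j+1) := by
  by_cases h : j < M
  · rw [vex_lt (Fin.tail v) j h, vex_lt v (j+1) (by omega)]
    rfl
  · rw [vex, dif_neg h, vex, dif_neg (by omega)]

lemma ps_tail {M : ℕ} (v : Fin (M+1) → Bool) (t : ℕ) :
    ps v (t+1) = sg (v 0) + ps (Fin.tail v) t := by
  rw [ps, Finset.sum_range_succ', ps]
  have h0 : vex v 0 = v 0 := by rw [vex_lt v 0 (by omega)]; rfl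
  rw [h0, add_comm]
  congr 1
  apply Finset.sum_congr rfl
  intro j _
  rw [vex_tail]

lemma vex_snoc {M : ℕ} (u : Fin M → Bool) (b : Bool) (j : ℕ) (h : j < M) :
    vex (Fin.snoc u b) j = vex u j := by
  rw [vex_lt (Fin.snoc u b) j (by omega), vex_lt u j h]
  have e : (⟨j, by omega⟩ : Fin (M+1)) = (⟨j, h⟩ : Fin M).castSucc := rfl
  rw [e, Fin.snoc_castSucc]

lemma vex_snoc_last {M : ℕ} (u : Fin M → Bool) (b : Bool) :
    vex (Fin.snoc u b) M = b := by
  rw [vex_lt (Fin.snoc u b) M (by omega)]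
  have e : (⟨M, by omega⟩ : Fin (M+1)) = Fin.last M := rfl
  rw [e, Fin.snoc_last]

lemma ps_snoc {M : ℕ} (u : Fin M → Bool) (b : Bool) (t : ℕ) (ht : t ≤ M) :
    ps (Fin.snoc u b) t = ps u t := by
  rw [ps, ps]
  apply Finset.sum_congr rfl
  intro j hj
  rw [Finset.mem_range] at hj
  rw [vex_snoc u b j (by omega)]

lemma ps_snoc_top {M : ℕ} (u : Fin M → Bool) (b : Bool) :
    ps (Fin.snoc u b) (M+1) = ps u M + sg b := by
  rw [ps_step, ps_snoc u b M le_rfl, vex_snoc_last]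

/-- Splitting a subtype count along a further (classical) case distinction. -/
lemma nat_card_split {α : Type*} [Finite α] (P Q : α → Prop) :
    Nat.card {v : α // P v}
      = Nat.card {v : α // P v ∧ Q v} + Nat.card {v : α // P v ∧ ¬ Q v} := by
  classical
  rw [← Nat.card_sum]
  apply Nat.card_congr
  exact ((Equiv.sumCompl (fun x : {v : α // P v} => Q x.1)).symm.trans
    (Equiv.sumCongr
      ((Equiv.subtypeSubtypeEquivSubtypeInter P Q))
      ((Equiv.subtypeSubtypeEquivSubtypeInter P (fun v => ¬ Q v)))))

lemma nat_card_compl {α : Type*} [Finite α] (P : α → Prop) :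
    Nat.card {v : α // P v} + Nat.card {v : α // ¬ P v} = Nat.card α := by
  classical
  rw [← Nat.card_sum]
  exact Nat.card_congr (Equiv.sumCompl P)

lemma nat_card_bool_fun (m : ℕ) : Nat.card (Fin m → Bool) = 2^m := by
  rw [Nat.card_eq_fintype_card]
  simp

/-- Peeling a forced first letter. -/
lemma nat_card_cons_peel {M : ℕ} (P : (Fin M → Bool) → Prop) (b : Bool) :
    Nat.card {v : Fin (M+1) → Bool // v 0 = b ∧ P (Fin.tail v)}
      = Nat.card {u : Fin M → Bool // P u} := by
  apply Nat.card_congr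
  refine ⟨fun x => ⟨Fin.tail x.1, x.2.2⟩,
    fun y => ⟨Fin.cons b y.1, ⟨Fin.cons_zero _ _, by
      simp only [Fin.tail_cons]
      exact y.2⟩⟩, ?_, ?_⟩
  · rintro ⟨v, hv⟩
    apply Subtype.ext
    show Fin.cons b (Fin.tail v) = v
    rw [← hv.1, Fin.cons_self_tail]
  · rintro ⟨u, hu⟩
    apply Subtype.ext
    simp

/-- Peeling a prescribed last letter. -/
lemma nat_card_last_peel {M : ℕ} (P : (Fin (M+1) → Bool) → Prop) (b : Bool) :
    Nat.card {v : Fin (M+1) → Bool // P v ∧ v (Fin.last M) = b}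
      = Nat.card {u : Fin M → Bool // P (Fin.snoc u b)} := by
  apply Nat.card_congr
  refine ⟨fun x => ⟨Fin.init x.1, by
      obtain ⟨v, hP, hb⟩ := x
      show P (Fin.snoc (Fin.init v) b)
      rw [← hb, Fin.snoc_init_self]
      exact hP⟩,
    fun y => ⟨Fin.snoc y.1 b, ⟨y.2, Fin.snoc_last _ _⟩⟩, ?_, ?_⟩
  · rintro ⟨v, hv⟩
    apply Subtype.ext
    show Fin.snoc (Fin.init v) b = v
    rw [← hv.2, Fin.snoc_init_self]
  · rintro ⟨u, hu⟩
    apply Subtype.ext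
    simp

/-- Splitting a count over the last letter. -/
lemma nat_card_snoc_split {M : ℕ} (P : (Fin (M+1) → Bool) → Prop) :
    Nat.card {v : Fin (M+1) → Bool // P v}
      = Nat.card {u : Fin M → Bool // P (Fin.snoc u false)}
        + Nat.card {u : Fin M → Bool // P (Fin.snoc u true)} := by
  rw [nat_card_split P (fun v => v (Fin.last M) = false)]
  congr 1
  · exact nat_card_last_peel P false
  · rw [← nat_card_last_peel P true]
    apply Nat.card_congr
    apply Equiv.subtypeEquivRight
    intro v
    simp

/-- A free (unconstrained) last letter doubles the count. -/
lemma nat_card_free_last {M : ℕ} (Q : (Fin M → Bool) → Prop) :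
    Nat.card {v : Fin (M+1) → Bool // Q (Fin.init v)}
      = 2 * Nat.card {u : Fin M → Bool // Q u} := by
  rw [nat_card_snoc_split (fun v => Q (Fin.init v))]
  simp only [Fin.init_snoc]
  ring

/-! ### Nonnegative walks: the ballot-type count -/

def tc {M : ℕ} (v : Fin M → Bool) : ℕ := ∑ j : Fin M, (v j).toNat

lemma tc_le {M : ℕ} (v : Fin M → Bool) : tc v ≤ M := by
  calc tc v ≤ ∑ _j : Fin M, 1 := Finset.sum_le_sum (fun j _ => by cases v j <;> simp)
  _ = M := by simp

lemma tc_snoc {M : ℕ} (u : Fin M → Bool) (b : Bool) :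
    tc (Fin.snoc u b) = tc u + b.toNat := by
  rw [tc, Fin.sum_univ_castSucc]
  simp only [Fin.snoc_castSucc, Fin.snoc_last]
  rfl

lemma ps_end {M : ℕ} (v : Fin M → Bool) : ps v M = (M : ℤ) - 2 * (tc v : ℤ) := by
  rw [ps, Finset.sum_range]
  have h : ∀ i : Fin M, sg (vex v i) = 1 - 2 * ((v i).toNat : ℤ) := by
    intro i
    rw [vex_lt v i i.isLt]
    have e : (⟨(i:ℕ), i.isLt⟩ : Fin M) = i := by apply Fin.ext; rfl
    rw [e]
    cases v i <;> simp [sg]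
  rw [Finset.sum_congr rfl (fun i _ => h i), Finset.sum_sub_distrib]
  rw [← Finset.mul_sum]
  have e2 : ((tc v : ℕ) : ℤ) = ∑ i : Fin M, ((v i).toNat : ℤ) := by
    rw [tc]; push_cast; rfl
  rw [← e2]
  simp

def allnn {M : ℕ} (v : Fin M → Bool) : Prop := ∀ t ≤ M, 0 ≤ ps v t

lemma allnn_snoc_false {M : ℕ} (u : Fin M → Bool) :
    allnn (Fin.snoc u false) ↔ allnn u := by
  constructor
  · intro h t ht
    have := h t (by omega)
    rwa [ps_snoc u false t ht] at this
  · intro h t ht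
    by_cases h2 : t ≤ M
    · rw [ps_snoc u false t h2]; exact h t h2
    · have ht' : t = M+1 := by omega
      subst ht'
      rw [ps_snoc_top]
      have := h M le_rfl
      simp only [sg, Bool.false_eq_true, if_false]
      omega

lemma allnn_snoc_true {M : ℕ} (u : Fin M → Bool) :
    allnn (Fin.snoc u true) ↔ (allnn u ∧ 1 ≤ ps u M) := by
  constructor
  · intro h
    constructor
    · intro t ht
      have := h t (by omega)
      rwa [ps_snoc u true t ht] at this
    · have := h (M+1) le_rfl
      rw [ps_snoc_top] at this
      simp only [sg, if_true] at this
      omega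
  · rintro ⟨h, hM⟩ t ht
    by_cases h2 : t ≤ M
    · rw [ps_snoc u true t h2]; exact h t h2
    · have ht' : t = M+1 := by omega
      subst ht'
      rw [ps_snoc_top]
      simp only [sg, if_true]
      omega

noncomputable def dn (M k : ℕ) : ℕ :=
  Nat.card {v : Fin M → Bool // allnn v ∧ tc v = k}

lemma dn_zero_step (M : ℕ) : dn (M+1) 0 = dn M 0 := by
  rw [dn, nat_card_snoc_split (fun v => allnn v ∧ tc v = 0)]
  have h1 : Nat.card {u : Fin M → Bool //
      allnn (Fin.snoc u true) ∧ tc (Fin.snoc u true) = 0} = 0 := by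
    have : IsEmpty {u : Fin M → Bool //
        allnn (Fin.snoc u true) ∧ tc (Fin.snoc u true) = 0} := by
      constructor
      rintro ⟨u, _, htc⟩
      rw [tc_snoc] at htc
      simp only [Bool.toNat_true] at htc
      omega
    exact Nat.card_of_isEmpty
  rw [h1, add_zero, dn]
  apply Nat.card_congr
  apply Equiv.subtypeEquivRight
  intro u
  rw [allnn_snoc_false, tc_snoc]
  try simp

lemma dn_succ_step (M k : ℕ) (hk : 1 ≤ k) :
    dn (M+1) k = dn M k + (if 2*k ≤ M+1 then dn M (k-1) else 0) := by
  rw [dn, nat_card_snoc_split (fun v => allnn v ∧ tc v = k)]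
  congr 1
  · rw [dn]
    apply Nat.card_congr
    apply Equiv.subtypeEquivRight
    intro u
    rw [allnn_snoc_false, tc_snoc]
    try simp
  · split_ifs with hcond
    · rw [dn]
      apply Nat.card_congr
      apply Equiv.subtypeEquivRight
      intro u
      rw [allnn_snoc_true, tc_snoc]
      have he := ps_end u
      constructor
      · rintro ⟨⟨h1, _⟩, h3⟩
        refine ⟨h1, ?_⟩
        simp only [Bool.toNat_true] at h3
        omega
      · rintro ⟨h1, h2⟩
        have h3 : tc u + true.toNat = k := by
          simp only [Bool.toNat_true]
          omega
        refine ⟨⟨h1, ?_⟩, h3⟩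
        rw [he, h2]
        have : ((k - 1 : ℕ) : ℤ) = (k : ℤ) - 1 := by omega
        rw [this]
        omega
    · have : IsEmpty {u : Fin M → Bool //
          allnn (Fin.snoc u true) ∧ tc (Fin.snoc u true) = k} := by
        constructor
        rintro ⟨u, ha, htc⟩
        rw [allnn_snoc_true] at ha
        rw [tc_snoc] at htc
        simp only [Bool.toNat_true] at htc
        have he := ps_end u
        have h2 := ha.2
        omega
      rw [Nat.card_of_isEmpty]

def ch (M : ℕ) (k : ℤ) : ℤ := if k < 0 then 0 else (M.choose k.toNat : ℤ)

lemma ch_nonneg_eq (M : ℕ) (k : ℕ) : ch M (k : ℤ) = (M.choose k : ℤ) := by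
  rw [ch, if_neg (by omega)]
  simp

lemma ch_pascal (M : ℕ) (k : ℤ) : ch (M+1) k = ch M k + ch M (k-1) := by
  rcases lt_trichotomy k 0 with h | h | h
  · rw [ch, if_pos h, ch, if_pos h, ch, if_pos (by omega)]; ring
  · subst h
    norm_num [ch]
  · have h1 : ¬ (k < 0) := by omega
    have h2 : ¬ (k - 1 < 0) := by omega
    rw [ch, if_neg h1, ch, if_neg h1, ch, if_neg h2]
    have e : k.toNat = (k-1).toNat + 1 := by omega
    rw [e, Nat.choose_succ_succ]
    push_cast
    ring

lemma dn_closed : ∀ M k : ℕ,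
    (dn M k : ℤ) = if 2*k ≤ M then ch M k - ch M ((k:ℤ)-1) else 0 := by
  intro M
  induction M with
  | zero =>
      intro k
      rcases Nat.eq_zero_or_pos k with hk | hk
      · subst hk
        have h1 : dn 0 0 = 1 := by
          rw [dn]
          have e : Nat.card {v : Fin 0 → Bool // allnn v ∧ tc v = 0}
              = Nat.card (Fin 0 → Bool) := by
            apply Nat.card_congr
            apply Equiv.subtypeUnivEquiv
            intro v
            constructor
            · intro t ht
              have : t = 0 := by omega
              subst this
              rw [ps_zero]
            · rw [tc]; simp
          rw [e, nat_card_bool_fun]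
          norm_num
        rw [h1]
        norm_num [ch]
      · have h0 : dn 0 k = 0 := by
          rw [dn]
          have : IsEmpty {v : Fin 0 → Bool // allnn v ∧ tc v = k} := by
            constructor
            rintro ⟨v, _, h2⟩
            have := tc_le v
            omega
          rw [Nat.card_of_isEmpty]
        rw [h0, if_neg (by omega)]
        simp
  | succ M ih =>
      intro k
      rcases Nat.eq_zero_or_pos k with hk | hk
      · subst hk
        rw [dn_zero_step, ih 0]
        norm_num [ch]
      · obtain ⟨k', rfl⟩ : ∃ k', k = k' + 1 := ⟨k - 1, by omega⟩
        rw [dn_succ_step M (k'+1) (by omega)]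
        have e1 : (k'+1) - 1 = k' := by omega
        rw [e1]
        push_cast [ih (k'+1), ih k']
        rw [show (k':ℤ)+1-1 = (k':ℤ) by ring]
        by_cases c2 : 2*(k'+1) ≤ M+1
        · rw [if_pos c2, if_pos c2]
          by_cases c1 : 2*(k'+1) ≤ M
          · rw [if_pos c1, if_pos (show 2*k' ≤ M by omega)]
            rw [ch_pascal M ((k':ℤ)+1), ch_pascal M (k':ℤ),
              show (k':ℤ)+1-1 = (k':ℤ) by ring]
            ring
          · have hM : M = 2*k'+1 := by omega
            rw [if_neg c1, if_pos (show 2*k' ≤ M by omega)]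
            have hsymm : ch M ((k':ℤ)+1) = ch M (k':ℤ) := by
              rw [show ((k':ℤ)+1) = ((k'+1 : ℕ) : ℤ) by push_cast; ring,
                ch_nonneg_eq, ch_nonneg_eq]
              subst hM
              have hs := Nat.choose_symm (n := 2*k'+1) (k := k'+1) (by omega)
              rw [show 2*k'+1 - (k'+1) = k' by omega] at hs
              rw [hs]
            rw [ch_pascal M ((k':ℤ)+1), ch_pascal M (k':ℤ),
              show (k':ℤ)+1-1 = (k':ℤ) by ring, hsymm]
            ring
        · rw [if_neg c2, if_neg c2, if_neg (show ¬ 2*(k'+1) ≤ M by omega)]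
          ring

lemma ch_tele (M : ℕ) : ∀ B : ℕ,
    ∑ k ∈ Finset.range (B+1), (ch M (k:ℤ) - ch M ((k:ℤ)-1)) = ch M (B:ℤ) := by
  intro B
  induction B with
  | zero => norm_num [ch]
  | succ B ih =>
      rw [Finset.sum_range_succ, ih]
      push_cast
      ring

lemma allnn_card (M : ℕ) :
    Nat.card {v : Fin M → Bool // allnn v} = M.choose (M/2) := by
  classical
  have hfib : (Finset.univ.filter (fun v : Fin M → Bool => allnn v)).card
      = ∑ k ∈ Finset.range (M+1), dn M k := by
    rw [Finset.card_eq_sum_card_fiberwise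
      (f := tc) (t := Finset.range (M+1))
      (fun v _ => Finset.mem_range.mpr (by have := tc_le v; omega))]
    refine Finset.sum_congr rfl (fun k _ => ?_)
    rw [Finset.filter_filter, dn, Nat.card_eq_fintype_card, Fintype.card_subtype]
  have hmain : Nat.card {v : Fin M → Bool // allnn v}
      = (Finset.univ.filter (fun v : Fin M → Bool => allnn v)).card := by
    rw [Nat.card_eq_fintype_card, Fintype.card_subtype]
  rw [hmain, hfib]
  have h2 : ∑ k ∈ Finset.range (M+1), ((dn M k : ℕ) : ℤ) = ch M ((M/2 : ℕ) : ℤ) := by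
    rw [Finset.sum_congr rfl (fun k _ => dn_closed M k)]
    have hsub : Finset.range (M/2+1) ⊆ Finset.range (M+1) :=
      Finset.range_subset_range.mpr (by omega)
    have hzero : ∀ k ∈ Finset.range (M+1), k ∉ Finset.range (M/2+1) →
        (if 2*k ≤ M then ch M (k:ℤ) - ch M ((k:ℤ)-1) else 0) = 0 := by
      intro k _ hk
      rw [Finset.mem_range, not_lt] at hk
      rw [if_neg (by omega : ¬ 2*k ≤ M)]
    rw [← Finset.sum_subset hsub hzero]
    have h3 : ∀ k ∈ Finset.range (M/2+1),
        (if 2*k ≤ M then ch M (k:ℤ) - ch M ((k:ℤ)-1) else 0)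
          = ch M (k:ℤ) - ch M ((k:ℤ)-1) := by
      intro k hk
      rw [Finset.mem_range] at hk
      rw [if_pos (by omega : 2*k ≤ M)]
    rw [Finset.sum_congr rfl h3]
    exact ch_tele M (M/2)
  rw [ch_nonneg_eq] at h2
  have h4 : ((∑ k ∈ Finset.range (M+1), dn M k : ℕ) : ℤ)
      = ∑ k ∈ Finset.range (M+1), ((dn M k : ℕ) : ℤ) := by push_cast; rfl
  omega

lemma allnn_card_odd (n : ℕ) :
    Nat.card {v : Fin (2*n+1) → Bool // allnn v} = (2*n+1).choose (n+1) := by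
  rw [allnn_card]
  rw [show (2*n+1)/2 = n by omega]
  have h := Nat.choose_symm (n := 2*n+1) (k := n+1) (by omega)
  rw [show 2*n+1 - (n+1) = n by omega] at h
  omega
/-! ### Walk characterizations of the block events -/

lemma qm_le {M : ℕ} (n : ℕ) (v : Fin M → Bool) (c j : ℕ) (hj : j ≤ n) :
    qm n v c ≤ ps v (c + 2*j) :=
  Finset.inf'_le _ (Finset.mem_range.mpr (by omega))

lemma qm_attained {M : ℕ} (n : ℕ) (v : Fin M → Bool) (c : ℕ) :
    ∃ j ≤ n, qm n v c = ps v (c + 2*j) := by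
  obtain ⟨j, hj, h⟩ := Finset.exists_mem_eq_inf'
    (Finset.nonempty_range_iff.mpr (Nat.succ_ne_zero n)) (fun j => ps v (c + 2*j))
  rw [Finset.mem_range] at hj
  exact ⟨j, by omega, h⟩

lemma le_qm {M : ℕ} (n : ℕ) (v : Fin M → Bool) (c : ℕ) (A : ℤ)
    (h : ∀ j ≤ n, A ≤ ps v (c + 2*j)) : A ≤ qm n v c :=
  Finset.le_inf' _ _ (fun j hj => h j (by rw [Finset.mem_range] at hj; omega))

lemma ps_step_le {M : ℕ} (v : Fin M → Bool) (t : ℕ) :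
    ps v (t+1) ≤ ps v t + 1 ∧ ps v t - 1 ≤ ps v (t+1) := by
  have h := ps_step v t
  rcases sg_cases (vex v t) with h1 | h1 <;> rw [h1] at h <;> omega

def dq {M : ℕ} (n : ℕ) (v : Fin M → Bool) (k : ℕ) : ℤ := qm n v (k+1) - qm n v k

/-- Characterization of the `00` block event. -/
lemma char00 (n : ℕ) (v : Fin (2*n+3) → Bool) :
    (dq n v 0 = 1 ∧ dq n v 1 = 1) ↔ (∀ t, 1 ≤ t → t ≤ 2*n+2 → 1 ≤ ps v t) := by
  have hps0 : ps v 0 = 0 := ps_zero v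
  constructor
  · rintro ⟨h0, h1⟩
    have h0' : qm n v 1 - qm n v 0 = 1 := h0
    have h1' : qm n v 2 - qm n v 1 = 1 := h1
    have hq0 : qm n v 0 = 0 := by
      obtain ⟨j, hj, heq⟩ := qm_attained n v 0
      rcases Nat.eq_zero_or_pos j with hj0 | hj0
      · subst hj0; simpa [hps0] using heq
      · exfalso
        have h2 := qm_le n v 2 (j-1) (by omega)
        rw [show 2 + 2*(j-1) = 0 + 2*j by omega] at h2
        omega
    intro t h1t h2t
    rcases Nat.even_or_odd t with he | ho
    · obtain ⟨j, hj⟩ := he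
      have h2 := qm_le n v 2 (j-1) (by omega)
      rw [show 2 + 2*(j-1) = t by omega] at h2
      omega
    · obtain ⟨j, hj⟩ := ho
      have h2 := qm_le n v 1 j (by omega)
      rw [show 1 + 2*j = t by omega] at h2
      omega
  · intro h
    have hps1 : ps v 1 = 1 := by
      have hb : ps v 1 ≤ ps v 0 + 1 ∧ ps v 0 - 1 ≤ ps v 1 := ps_step_le v 0
      have := h 1 (by omega) (by omega)
      omega
    have hps2 : ps v 2 = 2 := by
      have hb : ps v 2 ≤ ps v 1 + 1 ∧ ps v 1 - 1 ≤ ps v 2 := ps_step_le v 1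
      have hpar := ps_parity v 2
      have := h 2 (by omega) (by omega)
      omega
    have hq0 : qm n v 0 = 0 := by
      apply le_antisymm
      · have := qm_le n v 0 0 (by omega)
        simpa [hps0] using this
      · apply le_qm
        intro j hj
        rcases Nat.eq_zero_or_pos j with hj0 | hj0
        · subst hj0; simp [hps0]
        · have := h (0 + 2*j) (by omega) (by omega)
          omega
    have hq1 : qm n v 1 = 1 := by
      apply le_antisymm
      · have := qm_le n v 1 0 (by omega)
        simpa [hps1] using this
      · apply le_qm
        intro j hj
        exact h (1 + 2*j) (by omega) (by omega)
    have hq2 : qm n v 2 = 2 := by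
      apply le_antisymm
      · have := qm_le n v 2 0 (by omega)
        simpa [hps2] using this
      · apply le_qm
        intro j hj
        have hpar := ps_parity v (2 + 2*j)
        have := h (2 + 2*j) (by omega) (by omega)
        omega
    constructor
    · show qm n v 1 - qm n v 0 = 1
      omega
    · show qm n v 2 - qm n v 1 = 1
      omega

/-- Characterization of the `000` block event. -/
lemma char000 (n : ℕ) (v : Fin (2*n+3) → Bool) :
    (dq n v 0 = 1 ∧ dq n v 1 = 1 ∧ dq n v 2 = 1) ↔
      (ps v 1 = 1 ∧ ps v 2 = 2 ∧ ps v 3 = 3 ∧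
        ∀ t, 4 ≤ t → t ≤ 2*n+3 → 2 ≤ ps v t) := by
  have hps0 : ps v 0 = 0 := ps_zero v
  constructor
  · rintro ⟨h0, h1, h2⟩
    have h0' : qm n v 1 - qm n v 0 = 1 := h0
    have h1' : qm n v 2 - qm n v 1 = 1 := h1
    have h2' : qm n v 3 - qm n v 2 = 1 := h2
    have hq0 : qm n v 0 = 0 := by
      obtain ⟨j, hj, heq⟩ := qm_attained n v 0
      rcases Nat.eq_zero_or_pos j with hj0 | hj0
      · subst hj0; simpa [hps0] using heq
      · exfalso
        have hb := qm_le n v 2 (j-1) (by omega)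
        rw [show 2 + 2*(j-1) = 0 + 2*j by omega] at hb
        omega
    have hb1 : ps v 1 ≤ ps v 0 + 1 ∧ ps v 0 - 1 ≤ ps v 1 := ps_step_le v 0
    have hb2 : ps v 2 ≤ ps v 1 + 1 ∧ ps v 1 - 1 ≤ ps v 2 := ps_step_le v 1
    have hb3 : ps v 3 ≤ ps v 2 + 1 ∧ ps v 2 - 1 ≤ ps v 3 := ps_step_le v 2
    have hl1 := qm_le n v 1 0 (by omega)
    have hl2 := qm_le n v 2 0 (by omega)
    have hl3 := qm_le n v 3 0 (by omega)
    simp only [Nat.add_zero, Nat.mul_zero] at hl1 hl2 hl3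
    have hps1 : ps v 1 = 1 := by omega
    have hps2 : ps v 2 = 2 := by omega
    have hps3 : ps v 3 = 3 := by omega
    refine ⟨hps1, hps2, hps3, ?_⟩
    intro t h4t h2t
    rcases Nat.even_or_odd t with he | ho
    · obtain ⟨j, hj⟩ := he
      have hb := qm_le n v 2 (j-1) (by omega)
      rw [show 2 + 2*(j-1) = t by omega] at hb
      omega
    · obtain ⟨j, hj⟩ := ho
      have hb := qm_le n v 3 (j-1) (by omega)
      rw [show 3 + 2*(j-1) = t by omega] at hb
      omega
  · rintro ⟨hps1, hps2, hps3, htail⟩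
    have hodd : ∀ j, 1 ≤ j → j ≤ n+1 → 3 ≤ ps v (1 + 2*j) := by
      intro j h1j h2j
      have hpar := ps_parity v (1 + 2*j)
      rcases Nat.eq_or_lt_of_le h1j with h | h
      · rw [show 1 + 2*j = 3 by omega]; omega
      · have := htail (1 + 2*j) (by omega) (by omega)
        omega
    have heven : ∀ j, 1 ≤ j → j ≤ n + 1 → 2 ≤ ps v (2*j) := by
      intro j h1j h2j
      rcases Nat.eq_or_lt_of_le h1j with h | h
      · rw [show 2*j = 2 by omega]; omega
      · exact htail (2*j) (by omega) (by omega)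
    have hq0 : qm n v 0 = 0 := by
      apply le_antisymm
      · have := qm_le n v 0 0 (by omega)
        simpa [hps0] using this
      · apply le_qm
        intro j hj
        rcases Nat.eq_zero_or_pos j with hj0 | hj0
        · subst hj0; simp [hps0]
        · have := heven j (by omega) (by omega)
          rw [show 0 + 2*j = 2*j by omega]
          omega
    have hq1 : qm n v 1 = 1 := by
      apply le_antisymm
      · have := qm_le n v 1 0 (by omega)
        simpa [hps1] using this
      · apply le_qm
        intro j hj
        rcases Nat.eq_zero_or_pos j with hj0 | hj0
        · subst hj0; simp [hps1]
        · have := hodd j (by omega) (by omega)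
          omega
    have hq2 : qm n v 2 = 2 := by
      apply le_antisymm
      · have := qm_le n v 2 0 (by omega)
        simpa [hps2] using this
      · apply le_qm
        intro j hj
        have := heven (j+1) (by omega) (by omega)
        rw [show 2 + 2*j = 2*(j+1) by omega]
        omega
    have hq3 : qm n v 3 = 3 := by
      apply le_antisymm
      · have := qm_le n v 3 0 (by omega)
        simpa [hps3] using this
      · apply le_qm
        intro j hj
        have := hodd (j+1) (by omega) (by omega)
        rw [show 3 + 2*j = 1 + 2*(j+1) by omega]
        omega
    refine ⟨?_, ?_, ?_⟩
    · show qm n v 1 - qm n v 0 = 1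
      omega
    · show qm n v 2 - qm n v 1 = 1
      omega
    · show qm n v 3 - qm n v 2 = 1
      omega
/-! ### Restriction and reversal -/

lemma ps_init {M : ℕ} (v : Fin (M+1) → Bool) (t : ℕ) (ht : t ≤ M) :
    ps (Fin.init v) t = ps v t := by
  conv_rhs => rw [← Fin.snoc_init_self v]
  rw [ps_snoc _ _ t ht]

lemma qm_init {M : ℕ} (n : ℕ) (v : Fin (M+1) → Bool) (c : ℕ) (h : c + 2*n ≤ M) :
    qm n (Fin.init v) c = qm n v c := by
  rw [qm, qm]
  refine Finset.inf'_congr _ rfl ?_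
  intro j hj
  rw [Finset.mem_range] at hj
  exact ps_init v (c + 2*j) (by omega)

lemma dq_init {M : ℕ} (n : ℕ) (v : Fin (M+1) → Bool) (k : ℕ) (h : k + 1 + 2*n ≤ M) :
    dq n (Fin.init v) k = dq n v k := by
  show qm n (Fin.init v) (k+1) - qm n (Fin.init v) k = qm n v (k+1) - qm n v k
  rw [qm_init n v (k+1) (by omega), qm_init n v k (by omega)]

def rv {M : ℕ} (u : Fin M → Bool) : Fin M → Bool := fun j => !(u j.rev)

lemma rv_rv {M : ℕ} (u : Fin M → Bool) : rv (rv u) = u :=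
  funext fun j => by simp [rv, Fin.rev_rev]

lemma sg_not (b : Bool) : sg (!b) = - sg b := by cases b <;> simp [sg]

lemma vex_rv {M : ℕ} (u : Fin M → Bool) (j : ℕ) (h : j < M) :
    vex (rv u) j = !(vex u (M - 1 - j)) := by
  rw [vex_lt _ j h, vex_lt u (M-1-j) (by omega)]
  simp only [rv]
  congr 1
  apply congrArg
  apply Fin.ext
  simp only [Fin.val_rev, Fin.val_mk]
  omega

lemma ps_rv {M : ℕ} (u : Fin M → Bool) : ∀ t, t ≤ M →
    ps (rv u) t = ps u (M - t) - ps u M := by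
  intro t
  induction t with
  | zero => intro _; simp [ps_zero]
  | succ t ih =>
      intro ht
      rw [ps_step, ih (by omega), vex_rv u t (by omega), sg_not]
      have e : M - t = (M - t - 1) + 1 := by omega
      have hstep := ps_step u (M - t - 1)
      rw [← e] at hstep
      rw [show M - (t+1) = M - t - 1 by omega, show M - 1 - t = M - t - 1 by omega]
      omega

lemma inf'_reflect (n : ℕ) (f : ℕ → ℤ) :
    (Finset.range (n+1)).inf' (Finset.nonempty_range_iff.mpr (Nat.succ_ne_zero n))
        (fun j => f (n - j))
      = (Finset.range (n+1)).inf' (Finset.nonempty_range_iff.mpr (Nat.succ_ne_zero n)) f := by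
  apply le_antisymm
  · apply Finset.le_inf'
    intro j hj
    rw [Finset.mem_range] at hj
    have h2 := Finset.inf'_le (s := Finset.range (n+1))
      (fun j => f (n - j)) (Finset.mem_range.mpr (show n - j < n+1 by omega))
    simpa only [show n - (n - j) = j by omega] using h2
  · apply Finset.le_inf'
    intro j hj
    rw [Finset.mem_range] at hj
    exact Finset.inf'_le f (Finset.mem_range.mpr (show n - j < n+1 by omega))

lemma qm_rv {M : ℕ} (n : ℕ) (u : Fin M → Bool) (c : ℕ) (h : c + 2*n ≤ M) :
    qm n (rv u) c = qm n u (M - c - 2*n) - ps u M := by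
  have h1 : ∀ j ∈ Finset.range (n+1),
      ps (rv u) (c + 2*j)
        = (- ps u M) + (fun i => ps u ((M - c - 2*n) + 2*i)) (n - j) := by
    intro j hj
    rw [Finset.mem_range] at hj
    rw [ps_rv u (c+2*j) (by omega)]
    simp only
    rw [show M - (c+2*j) = (M - c - 2*n) + 2*(n-j) by omega]
    ring
  have h2 : qm n (rv u) c
      = (Finset.range (n+1)).inf' (Finset.nonempty_range_iff.mpr (Nat.succ_ne_zero n))
          (fun j => (- ps u M) + (fun i => ps u ((M - c - 2*n) + 2*i)) (n - j)) := by
    rw [qm]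
    exact Finset.inf'_congr _ rfl h1
  rw [h2, inf'_add_const, inf'_reflect n (fun i => ps u ((M - c - 2*n) + 2*i))]
  rw [qm]
  ring

lemma dq_rv (n : ℕ) (v : Fin (2*n+3) → Bool) (k : ℕ) (hk : k ≤ 2) :
    dq n (rv v) k = - dq n v (2-k) := by
  show qm n (rv v) (k+1) - qm n (rv v) k = -(qm n v ((2-k)+1) - qm n v (2-k))
  rw [qm_rv n v (k+1) (by omega), qm_rv n v k (by omega)]
  rw [show 2*n+3 - (k+1) - 2*n = 2-k by omega, show 2*n+3 - k - 2*n = (2-k)+1 by omega]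
  ring

/-! ### The block counts -/

def outP (n : ℕ) (b : List Bool) (v : Fin (2*n+3) → Bool) : Prop :=
  ∀ k : Fin b.length, (eca rule184)^[n] (emb n v) (k.val : ℤ) = b.get k

noncomputable def cnt (n : ℕ) (b : List Bool) : ℕ :=
  Nat.card {v : Fin (2*n+3) → Bool // outP n b v}

lemma sg_false : sg false = 1 := rfl
lemma sg_true : sg true = -1 := rfl

lemma outP_one (n : ℕ) (b0 : Bool) (v : Fin (2*n+3) → Bool) :
    outP n [b0] v ↔ dq n v 0 = sg b0 := by
  constructor
  · intro h
    exact (out_iff n v 0 (by omega) b0).mp (h ⟨0, by norm_num⟩)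
  · intro h k
    fin_cases k
    exact (out_iff n v 0 (by omega) b0).mpr h

lemma outP_two (n : ℕ) (b0 b1 : Bool) (v : Fin (2*n+3) → Bool) :
    outP n [b0, b1] v ↔ (dq n v 0 = sg b0 ∧ dq n v 1 = sg b1) := by
  constructor
  · intro h
    exact ⟨(out_iff n v 0 (by omega) b0).mp (h ⟨0, by norm_num⟩),
      (out_iff n v 1 (by omega) b1).mp (h ⟨1, by norm_num⟩)⟩
  · rintro ⟨h0, h1⟩ k
    fin_cases k
    · exact (out_iff n v 0 (by omega) b0).mpr h0
    · exact (out_iff n v 1 (by omega) b1).mpr h1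

lemma outP_three (n : ℕ) (b0 b1 b2 : Bool) (v : Fin (2*n+3) → Bool) :
    outP n [b0, b1, b2] v ↔
      (dq n v 0 = sg b0 ∧ dq n v 1 = sg b1 ∧ dq n v 2 = sg b2) := by
  constructor
  · intro h
    exact ⟨(out_iff n v 0 (by omega) b0).mp (h ⟨0, by norm_num⟩),
      (out_iff n v 1 (by omega) b1).mp (h ⟨1, by norm_num⟩),
      (out_iff n v 2 (by omega) b2).mp (h ⟨2, by norm_num⟩)⟩
  · rintro ⟨h0, h1, h2⟩ k
    fin_cases k
    · exact (out_iff n v 0 (by omega) b0).mpr h0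
    · exact (out_iff n v 1 (by omega) b1).mpr h1
    · exact (out_iff n v 2 (by omega) b2).mpr h2

/-- Dichotomy for the first difference on words of odd length `2n+1`. -/
lemma dq_pm1 (n : ℕ) (u : Fin (2*n+1) → Bool) :
    dq n u 0 = 1 ∨ dq n u 0 = -1 := by
  obtain ⟨j0, hj0, he0⟩ := qm_attained n u 0
  obtain ⟨j1, hj1, he1⟩ := qm_attained n u 1
  rw [show 0 + 2*j0 = 2*j0 by omega] at he0
  rw [show 1 + 2*j1 = 2*j1+1 by omega] at he1
  have hle : qm n u 1 ≤ ps u (2*j0+1) := by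
    have := qm_le n u 1 j0 hj0
    rwa [show 1 + 2*j0 = 2*j0+1 by omega] at this
  have hge : qm n u 0 ≤ ps u (2*j1) := by
    have := qm_le n u 0 j1 hj1
    rwa [show 0 + 2*j1 = 2*j1 by omega] at this
  have hs0 : ps u (2*j0+1) ≤ ps u (2*j0) + 1 ∧ ps u (2*j0) - 1 ≤ ps u (2*j0+1) :=
    ps_step_le u (2*j0)
  have hs1 : ps u (2*j1+1) ≤ ps u (2*j1) + 1 ∧ ps u (2*j1) - 1 ≤ ps u (2*j1+1) :=
    ps_step_le u (2*j1)
  have hp0 := ps_parity u (2*j0)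
  have hp1 := ps_parity u (2*j1+1)
  show qm n u 1 - qm n u 0 = 1 ∨ qm n u 1 - qm n u 0 = -1
  omega

lemma dq_rv1 (n : ℕ) (u : Fin (2*n+1) → Bool) :
    dq n (rv u) 0 = - dq n u 0 := by
  show qm n (rv u) 1 - qm n (rv u) 0 = -(qm n u 1 - qm n u 0)
  rw [qm_rv n u 1 (by omega), qm_rv n u 0 (by omega)]
  rw [show 2*n+1 - 1 - 2*n = 0 by omega, show 2*n+1 - 0 - 2*n = 1 by omega]
  ring

lemma count_E0 (n : ℕ) :
    Nat.card {u : Fin (2*n+1) → Bool // dq n u 0 = 1} = 2^(2*n) := by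
  have hcompl := nat_card_compl (fun u : Fin (2*n+1) → Bool => dq n u 0 = 1)
  rw [nat_card_bool_fun] at hcompl
  have hbij : Nat.card {u : Fin (2*n+1) → Bool // ¬ (dq n u 0 = 1)}
      = Nat.card {u : Fin (2*n+1) → Bool // dq n u 0 = 1} := by
    apply Nat.card_congr
    refine ⟨fun x => ⟨rv x.1, ?_⟩, fun x => ⟨rv x.1, ?_⟩, ?_, ?_⟩
    · rw [dq_rv1]
      rcases dq_pm1 n x.1 with h | h
      · exact absurd h x.2
      · rw [h]; norm_num
    · rw [dq_rv1, x.2]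
      norm_num
    · rintro ⟨u, hu⟩
      apply Subtype.ext
      exact rv_rv u
    · rintro ⟨u, hu⟩
      apply Subtype.ext
      exact rv_rv u
  have hpow : (2:ℕ)^(2*n+1) = 2^(2*n) + 2^(2*n) := by
    rw [pow_succ]; ring
  omega

lemma cnt_false (n : ℕ) : cnt n [false] = 2^(2*n+2) := by
  have e1 : cnt n [false]
      = Nat.card {v : Fin (2*n+3) → Bool //
          (fun u : Fin (2*n+2) → Bool => dq n u 0 = 1) (Fin.init v)} := by
    rw [cnt]
    apply Nat.card_congr
    apply Equiv.subtypeEquivRight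
    intro v
    rw [outP_one, sg_false]
    show dq n v 0 = 1 ↔ dq n (Fin.init v) 0 = 1
    rw [dq_init n v 0 (by omega)]
  have e2 : Nat.card {u : Fin (2*n+2) → Bool // dq n u 0 = 1}
      = Nat.card {u : Fin (2*n+2) → Bool //
          (fun w : Fin (2*n+1) → Bool => dq n w 0 = 1) (Fin.init u)} := by
    apply Nat.card_congr
    apply Equiv.subtypeEquivRight
    intro u
    show dq n u 0 = 1 ↔ dq n (Fin.init u) 0 = 1
    rw [dq_init n u 0 (by omega)]
  rw [e1, nat_card_free_last (fun u : Fin (2*n+2) → Bool => dq n u 0 = 1), e2,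
    nat_card_free_last (fun w : Fin (2*n+1) → Bool => dq n w 0 = 1), count_E0]
  rw [show 2*n+2 = (2*n+1)+1 by omega, pow_succ, pow_succ]
  ring
/-! ### Counts of the longer blocks -/

lemma equiv00 (n : ℕ) (u : Fin (2*n+2) → Bool) :
    (∀ t, 1 ≤ t → t ≤ 2*n+2 → 1 ≤ ps u t) ↔ (u 0 = false ∧ allnn (Fin.tail u)) := by
  have hz : ps (Fin.tail u) 0 = 0 := ps_zero _
  have h1 : ps u 1 = sg (u 0) + ps (Fin.tail u) 0 := ps_tail u 0
  constructor
  · intro h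
    have hu0 : u 0 = false := by
      have := h 1 (by omega) (by omega)
      cases hv : u 0
      · rfl
      · rw [hv, sg_true] at h1; omega
    refine ⟨hu0, ?_⟩
    intro s hs
    have ht := ps_tail u s
    rw [hu0, sg_false] at ht
    have := h (s+1) (by omega) (by omega)
    omega
  · rintro ⟨hu0, hall⟩ t h1t h2t
    obtain ⟨s, rfl⟩ : ∃ s, t = s + 1 := ⟨t-1, by omega⟩
    have ht := ps_tail u s
    rw [hu0, sg_false] at ht
    have := hall s (by omega)
    omega

lemma cnt_ff (n : ℕ) : cnt n [false, false] = 2 * (2*n+1).choose (n+1) := by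
  have e1 : cnt n [false, false]
      = Nat.card {v : Fin (2*n+3) → Bool //
          (fun u : Fin (2*n+2) → Bool =>
            ∀ t, 1 ≤ t → t ≤ 2*n+2 → 1 ≤ ps u t) (Fin.init v)} := by
    rw [cnt]
    apply Nat.card_congr
    apply Equiv.subtypeEquivRight
    intro v
    rw [outP_two, sg_false, char00]
    constructor <;> intro h t h1 h2
    · rw [ps_init v t (by omega)]; exact h t h1 h2
    · have := h t h1 h2; rwa [ps_init v t (by omega)] at this
  have e2 : Nat.card {u : Fin (2*n+2) → Bool // ∀ t, 1 ≤ t → t ≤ 2*n+2 → 1 ≤ ps u t}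
      = Nat.card {u : Fin (2*n+2) → Bool //
          u 0 = false ∧ (fun w : Fin (2*n+1) → Bool => allnn w) (Fin.tail u)} := by
    apply Nat.card_congr
    apply Equiv.subtypeEquivRight
    intro u
    exact equiv00 n u
  rw [e1, nat_card_free_last
      (fun u : Fin (2*n+2) → Bool => ∀ t, 1 ≤ t → t ≤ 2*n+2 → 1 ≤ ps u t), e2,
    nat_card_cons_peel (fun w : Fin (2*n+1) → Bool => allnn w) false, allnn_card_odd]

lemma equiv000a (n : ℕ) (v : Fin (2*n+3) → Bool) :
    (ps v 1 = 1 ∧ ps v 2 = 2 ∧ ps v 3 = 3 ∧ (∀ t, 4 ≤ t → t ≤ 2*n+3 → 2 ≤ ps v t))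
      ↔ (v 0 = false ∧ (ps (Fin.tail v) 1 = 1 ∧ ps (Fin.tail v) 2 = 2 ∧
          ∀ s, 3 ≤ s → s ≤ 2*n+2 → 1 ≤ ps (Fin.tail v) s)) := by
  have h1 : ps v 1 = sg (v 0) + ps (Fin.tail v) 0 := ps_tail v 0
  have h2 : ps v 2 = sg (v 0) + ps (Fin.tail v) 1 := ps_tail v 1
  have h3 : ps v 3 = sg (v 0) + ps (Fin.tail v) 2 := ps_tail v 2
  have hz : ps (Fin.tail v) 0 = 0 := ps_zero _
  constructor
  · rintro ⟨hp1, hp2, hp3, htail⟩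
    have hu0 : v 0 = false := by
      cases hv : v 0
      · rfl
      · rw [hv, sg_true] at h1; omega
    rw [hu0, sg_false] at h1 h2 h3
    refine ⟨hu0, by omega, by omega, ?_⟩
    intro s h3s h2s
    have ht := ps_tail v s
    rw [hu0, sg_false] at ht
    have := htail (s+1) (by omega) (by omega)
    omega
  · rintro ⟨hu0, hq1, hq2, hqt⟩
    rw [hu0, sg_false] at h1 h2 h3
    refine ⟨by omega, by omega, by omega, ?_⟩
    intro t h4 hle
    obtain ⟨s, rfl⟩ : ∃ s, t = s+1 := ⟨t-1, by omega⟩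
    have ht := ps_tail v s
    rw [hu0, sg_false] at ht
    have := hqt s (by omega) (by omega)
    omega

lemma equiv000b (n : ℕ) (u : Fin (2*n+2) → Bool) :
    (ps u 1 = 1 ∧ ps u 2 = 2 ∧ (∀ s, 3 ≤ s → s ≤ 2*n+2 → 1 ≤ ps u s))
      ↔ (u 0 = false ∧ (ps (Fin.tail u) 1 = 1 ∧
          ∀ s, 2 ≤ s → s ≤ 2*n+1 → 0 ≤ ps (Fin.tail u) s)) := by
  have h1 : ps u 1 = sg (u 0) + ps (Fin.tail u) 0 := ps_tail u 0
  have h2 : ps u 2 = sg (u 0) + ps (Fin.tail u) 1 := ps_tail u 1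
  have hz : ps (Fin.tail u) 0 = 0 := ps_zero _
  constructor
  · rintro ⟨hp1, hp2, htail⟩
    have hu0 : u 0 = false := by
      cases hv : u 0
      · rfl
      · rw [hv, sg_true] at h1; omega
    rw [hu0, sg_false] at h1 h2
    refine ⟨hu0, by omega, ?_⟩
    intro s h2s hle
    have ht := ps_tail u s
    rw [hu0, sg_false] at ht
    have := htail (s+1) (by omega) (by omega)
    omega
  · rintro ⟨hu0, hq1, hqt⟩
    rw [hu0, sg_false] at h1 h2
    refine ⟨by omega, by omega, ?_⟩
    intro t h3 hle
    obtain ⟨s, rfl⟩ : ∃ s, t = s+1 := ⟨t-1, by omega⟩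
    have ht := ps_tail u s
    rw [hu0, sg_false] at ht
    have := hqt s (by omega) (by omega)
    omega

lemma equiv000c (n : ℕ) (w : Fin (2*n+1) → Bool) :
    (ps w 1 = 1 ∧ (∀ s, 2 ≤ s → s ≤ 2*n+1 → 0 ≤ ps w s))
      ↔ (w 0 = false ∧ (∀ s, s ≤ 2*n → -1 ≤ ps (Fin.tail w) s)) := by
  have h1 : ps w 1 = sg (w 0) + ps (Fin.tail w) 0 := ps_tail w 0
  have hz : ps (Fin.tail w) 0 = 0 := ps_zero _
  constructor
  · rintro ⟨hp1, htail⟩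
    have hu0 : w 0 = false := by
      cases hv : w 0
      · rfl
      · rw [hv, sg_true] at h1; omega
    refine ⟨hu0, ?_⟩
    intro s hs
    rcases Nat.eq_zero_or_pos s with h0 | h0
    · subst h0; omega
    · have ht := ps_tail w s
      rw [hu0, sg_false] at ht
      have := htail (s+1) (by omega) (by omega)
      omega
  · rintro ⟨hu0, hqt⟩
    rw [hu0, sg_false] at h1
    refine ⟨by omega, ?_⟩
    intro t h2 hle
    obtain ⟨s, rfl⟩ : ∃ s, t = s+1 := ⟨t-1, by omega⟩
    have ht := ps_tail w s
    rw [hu0, sg_false] at ht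
    have := hqt s (by omega)
    omega

lemma equivAllnn (n : ℕ) (y : Fin (2*n+1) → Bool) :
    allnn y ↔ (y 0 = false ∧ (∀ s, s ≤ 2*n → -1 ≤ ps (Fin.tail y) s)) := by
  have h1 : ps y 1 = sg (y 0) + ps (Fin.tail y) 0 := ps_tail y 0
  have hz : ps (Fin.tail y) 0 = 0 := ps_zero _
  constructor
  · intro h
    have hu0 : y 0 = false := by
      have := h 1 (by omega)
      cases hv : y 0
      · rfl
      · rw [hv, sg_true] at h1; omega
    refine ⟨hu0, ?_⟩
    intro s hs
    have ht := ps_tail y s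
    rw [hu0, sg_false] at ht
    have := h (s+1) (by omega)
    omega
  · rintro ⟨hu0, hqt⟩ t ht
    rcases Nat.eq_zero_or_pos t with h0 | h0
    · subst h0; rw [ps_zero]
    · obtain ⟨s, rfl⟩ : ∃ s, t = s+1 := ⟨t-1, by omega⟩
      have hps := ps_tail y s
      rw [hu0, sg_false] at hps
      have := hqt s (by omega)
      omega

lemma cnt_fff (n : ℕ) : cnt n [false, false, false] = (2*n+1).choose (n+1) := by
  have e1 : cnt n [false, false, false]
      = Nat.card {v : Fin (2*n+3) → Bool //
          v 0 = false ∧ (fun u : Fin (2*n+2) → Bool =>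
            ps u 1 = 1 ∧ ps u 2 = 2 ∧ (∀ s, 3 ≤ s → s ≤ 2*n+2 → 1 ≤ ps u s))
              (Fin.tail v)} := by
    rw [cnt]
    apply Nat.card_congr
    apply Equiv.subtypeEquivRight
    intro v
    rw [outP_three, sg_false, char000]
    exact equiv000a n v
  have e2 : Nat.card {u : Fin (2*n+2) → Bool //
        ps u 1 = 1 ∧ ps u 2 = 2 ∧ (∀ s, 3 ≤ s → s ≤ 2*n+2 → 1 ≤ ps u s)}
      = Nat.card {u : Fin (2*n+2) → Bool //
          u 0 = false ∧ (fun w : Fin (2*n+1) → Bool =>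
            ps w 1 = 1 ∧ (∀ s, 2 ≤ s → s ≤ 2*n+1 → 0 ≤ ps w s)) (Fin.tail u)} := by
    apply Nat.card_congr
    apply Equiv.subtypeEquivRight
    intro u
    exact equiv000b n u
  have e3 : Nat.card {w : Fin (2*n+1) → Bool //
        ps w 1 = 1 ∧ (∀ s, 2 ≤ s → s ≤ 2*n+1 → 0 ≤ ps w s)}
      = Nat.card {w : Fin (2*n+1) → Bool //
          w 0 = false ∧ (fun z : Fin (2*n) → Bool =>
            ∀ s, s ≤ 2*n → -1 ≤ ps z s) (Fin.tail w)} := by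
    apply Nat.card_congr
    apply Equiv.subtypeEquivRight
    intro w
    exact equiv000c n w
  have e4 : Nat.card {y : Fin (2*n+1) → Bool // allnn y}
      = Nat.card {y : Fin (2*n+1) → Bool //
          y 0 = false ∧ (fun z : Fin (2*n) → Bool =>
            ∀ s, s ≤ 2*n → -1 ≤ ps z s) (Fin.tail y)} := by
    apply Nat.card_congr
    apply Equiv.subtypeEquivRight
    intro y
    exact equivAllnn n y
  have efin := allnn_card_odd n
  rw [e4, nat_card_cons_peel (fun z : Fin (2*n) → Bool =>
    ∀ s, s ≤ 2*n → -1 ≤ ps z s) false] at efin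
  rw [e1, nat_card_cons_peel (fun u : Fin (2*n+2) → Bool =>
      ps u 1 = 1 ∧ ps u 2 = 2 ∧ (∀ s, 3 ≤ s → s ≤ 2*n+2 → 1 ≤ ps u s)) false,
    e2, nat_card_cons_peel (fun w : Fin (2*n+1) → Bool =>
      ps w 1 = 1 ∧ (∀ s, 2 ≤ s → s ≤ 2*n+1 → 0 ≤ ps w s)) false,
    e3, nat_card_cons_peel (fun z : Fin (2*n) → Bool =>
      ∀ s, s ≤ 2*n → -1 ≤ ps z s) false, ← efin]

/-! ### Partitions and reflection -/

lemma cnt_part3 (n : ℕ) :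
    cnt n [false] = cnt n [false, false]
      + (cnt n [false, true, false] + cnt n [false, true, true]) := by
  have s1 : cnt n [false] = Nat.card {v : Fin (2*n+3) → Bool // dq n v 0 = 1} := by
    rw [cnt]
    apply Nat.card_congr
    apply Equiv.subtypeEquivRight
    intro v
    rw [outP_one, sg_false]
  have s2 := nat_card_split (fun v : Fin (2*n+3) → Bool => dq n v 0 = 1)
    (fun v => dq n v 1 = 1)
  have s3 : Nat.card {v : Fin (2*n+3) → Bool // dq n v 0 = 1 ∧ dq n v 1 = 1}
      = cnt n [false, false] := by
    rw [cnt]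
    apply Nat.card_congr
    apply Equiv.subtypeEquivRight
    intro v
    rw [outP_two, sg_false]
  have s4 : Nat.card {v : Fin (2*n+3) → Bool // dq n v 0 = 1 ∧ ¬ (dq n v 1 = 1)}
      = Nat.card {v : Fin (2*n+3) → Bool // dq n v 0 = 1 ∧ dq n v 1 = -1} := by
    apply Nat.card_congr
    apply Equiv.subtypeEquivRight
    intro v
    have hpm : dq n v 1 = 1 ∨ dq n v 1 = -1 := dq_pm n v 1 (by omega)
    constructor
    · rintro ⟨ha, hb⟩; exact ⟨ha, by omega⟩
    · rintro ⟨ha, hb⟩; exact ⟨ha, by omega⟩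
  have s5 := nat_card_split
    (fun v : Fin (2*n+3) → Bool => dq n v 0 = 1 ∧ dq n v 1 = -1)
    (fun v => dq n v 2 = 1)
  have s6 : Nat.card {v : Fin (2*n+3) → Bool //
        (dq n v 0 = 1 ∧ dq n v 1 = -1) ∧ dq n v 2 = 1}
      = cnt n [false, true, false] := by
    rw [cnt]
    apply Nat.card_congr
    apply Equiv.subtypeEquivRight
    intro v
    rw [outP_three, sg_false, sg_true]
    tauto
  have s7 : Nat.card {v : Fin (2*n+3) → Bool //
        (dq n v 0 = 1 ∧ dq n v 1 = -1) ∧ ¬ (dq n v 2 = 1)}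
      = cnt n [false, true, true] := by
    rw [cnt]
    apply Nat.card_congr
    apply Equiv.subtypeEquivRight
    intro v
    have hpm : dq n v 2 = 1 ∨ dq n v 2 = -1 := dq_pm n v 2 (by omega)
    rw [outP_three, sg_false, sg_true]
    constructor
    · rintro ⟨⟨ha, hb⟩, hc⟩; exact ⟨ha, hb, by omega⟩
    · rintro ⟨ha, hb, hc⟩; exact ⟨⟨ha, hb⟩, by omega⟩
  omega

lemma cnt_part2 (n : ℕ) :
    cnt n [false, false] = cnt n [false, false, false] + cnt n [false, false, true] := by
  have s1 : cnt n [false, false]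
      = Nat.card {v : Fin (2*n+3) → Bool // dq n v 0 = 1 ∧ dq n v 1 = 1} := by
    rw [cnt]
    apply Nat.card_congr
    apply Equiv.subtypeEquivRight
    intro v
    rw [outP_two, sg_false]
  have s2 := nat_card_split
    (fun v : Fin (2*n+3) → Bool => dq n v 0 = 1 ∧ dq n v 1 = 1)
    (fun v => dq n v 2 = 1)
  have s3 : Nat.card {v : Fin (2*n+3) → Bool //
        (dq n v 0 = 1 ∧ dq n v 1 = 1) ∧ dq n v 2 = 1}
      = cnt n [false, false, false] := by
    rw [cnt]
    apply Nat.card_congr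
    apply Equiv.subtypeEquivRight
    intro v
    rw [outP_three, sg_false]
    tauto
  have s4 : Nat.card {v : Fin (2*n+3) → Bool //
        (dq n v 0 = 1 ∧ dq n v 1 = 1) ∧ ¬ (dq n v 2 = 1)}
      = cnt n [false, false, true] := by
    rw [cnt]
    apply Nat.card_congr
    apply Equiv.subtypeEquivRight
    intro v
    have hpm : dq n v 2 = 1 ∨ dq n v 2 = -1 := dq_pm n v 2 (by omega)
    rw [outP_three, sg_false, sg_true]
    constructor
    · rintro ⟨⟨ha, hb⟩, hc⟩; exact ⟨ha, hb, by omega⟩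
    · rintro ⟨ha, hb, hc⟩; exact ⟨⟨ha, hb⟩, by omega⟩
  omega

lemma cnt_swap (n : ℕ) : cnt n [false, true, true] = cnt n [false, false, true] := by
  rw [cnt, cnt]
  have key : ∀ v : Fin (2*n+3) → Bool,
      outP n [false, true, true] v → outP n [false, false, true] (rv v) := by
    intro v h
    have h' := (outP_three n false true true v).mp h
    rw [sg_false, sg_true] at h'
    rw [outP_three, sg_false, sg_true]
    rw [dq_rv n v 0 (by omega), dq_rv n v 1 (by omega), dq_rv n v 2 (by omega)]
    rw [show (2:ℕ) - 0 = 2 by omega, show (2:ℕ) - 1 = 1 by omega,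
      show (2:ℕ) - 2 = 0 by omega]
    omega
  have key2 : ∀ v : Fin (2*n+3) → Bool,
      outP n [false, false, true] v → outP n [false, true, true] (rv v) := by
    intro v h
    have h' := (outP_three n false false true v).mp h
    rw [sg_false, sg_true] at h'
    rw [outP_three, sg_false, sg_true]
    rw [dq_rv n v 0 (by omega), dq_rv n v 1 (by omega), dq_rv n v 2 (by omega)]
    rw [show (2:ℕ) - 0 = 2 by omega, show (2:ℕ) - 1 = 1 by omega,
      show (2:ℕ) - 2 = 0 by omega]
    omega
  apply Nat.card_congr
  refine ⟨fun x => ⟨rv x.1, key x.1 x.2⟩, fun x => ⟨rv x.1, key2 x.1 x.2⟩, ?_, ?_⟩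
  · rintro ⟨v, hv⟩
    apply Subtype.ext
    exact rv_rv v
  · rintro ⟨v, hv⟩
    apply Subtype.ext
    exact rv_rv v
/-! ### The measure computation -/

lemma eca_local : ∀ (N : ℕ) (x y : ℤ → Bool) (k : ℤ),
    (∀ i : ℤ, k - N ≤ i → i ≤ k + N → x i = y i) →
    (eca rule184)^[N] x k = (eca rule184)^[N] y k := by
  intro N
  induction N with
  | zero =>
      intro x y k h
      simp only [Function.iterate_zero, id_eq]
      exact h k (by push_cast; omega) (by push_cast; omega)
  | succ N ih =>
      intro x y k h
      rw [Function.iterate_succ_apply, Function.iterate_succ_apply]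
      apply ih
      intro i hi1 hi2
      show rule184 (x (i-1)) (x i) (x (i+1)) = rule184 (y (i-1)) (y i) (y (i+1))
      have e1 : x (i-1) = y (i-1) := h (i-1) (by push_cast at hi1 ⊢; omega) (by push_cast at hi2 ⊢; omega)
      have e2 : x i = y i := h i (by push_cast at hi1 ⊢; omega) (by push_cast at hi2 ⊢; omega)
      have e3 : x (i+1) = y (i+1) := h (i+1) (by push_cast at hi1 ⊢; omega) (by push_cast at hi2 ⊢; omega)
      rw [e1, e2, e3]

def restr (n : ℕ) (x : ℤ → Bool) : Fin (2*n+3) → Bool :=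
  fun j => x ((j : ℕ) - (n : ℤ))

lemma emb_eq_on_window (n : ℕ) (v : Fin (2*n+3) → Bool) (x : ℤ → Bool)
    (hx : ∀ j : Fin (2*n+3), x ((j : ℕ) - (n : ℤ)) = v j) :
    ∀ i : ℤ, -(n:ℤ) ≤ i → i ≤ n + 2 → emb n v i = x i := by
  intro i h1 h2
  have hb : 0 ≤ i + n ∧ i + n < 2*n+3 := by constructor <;> push_cast <;> omega
  rw [emb, dif_pos hb]
  have hj := hx ⟨(i + n).toNat, by omega⟩
  have e : (((⟨(i + n).toNat, by omega⟩ : Fin (2*n+3)) : ℕ) : ℤ) - (n:ℤ) = i := by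
    simp only [Fin.val_mk]
    omega
  rw [e] at hj
  rw [← hj]

lemma preimage_eq (n : ℕ) (b : List Bool) (hb : b.length ≤ 3) :
    (eca rule184)^[n] ⁻¹' cylinder b
      = ⋃ v ∈ Finset.univ.filter (fun v : Fin (2*n+3) → Bool => outP n b v),
          {x : ℤ → Bool | ∀ j : Fin (2*n+3), x ((j : ℕ) - (n : ℤ)) = v j} := by
  ext x
  simp only [Set.mem_preimage, Set.mem_iUnion, Finset.mem_filter, Finset.mem_univ,
    true_and, Set.mem_setOf_eq, exists_prop]
  constructor
  · intro h
    refine ⟨restr n x, ?_, fun j => rfl⟩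
    intro k
    have hk : (k : ℕ) ≤ 2 := by have := k.isLt; omega
    have hloc := eca_local n (emb n (restr n x)) x ((k : ℕ) : ℤ)
      (fun i hi1 hi2 => emb_eq_on_window n (restr n x) x (fun j => rfl) i
        (by push_cast at hi1 ⊢; omega) (by push_cast at hi2 ⊢; omega))
    rw [hloc]
    exact h k
  · rintro ⟨v, hv, hxv⟩ k
    have hk : (k : ℕ) ≤ 2 := by have := k.isLt; omega
    have hloc := eca_local n (emb n v) x ((k : ℕ) : ℤ)
      (fun i hi1 hi2 => emb_eq_on_window n v x hxv i
        (by push_cast at hi1 ⊢; omega) (by push_cast at hi2 ⊢; omega))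
    rw [← hloc]
    exact hv k

lemma measure_cell {μ : Measure (ℤ → Bool)} (hber : IsBernoulli (1/2) μ)
    (n : ℕ) (v : Fin (2*n+3) → Bool) :
    μ {x : ℤ → Bool | ∀ j : Fin (2*n+3), x ((j : ℕ) - (n : ℤ)) = v j}
      = (ENNReal.ofReal (1/2))^(2*n+3) := by
  have hinj : Function.Injective (fun j : Fin (2*n+3) => ((j : ℕ) : ℤ) - (n : ℤ)) := by
    intro j₁ j₂ h
    simp only at h
    apply Fin.ext
    omega
  have hset : {x : ℤ → Bool | ∀ j : Fin (2*n+3), x ((j : ℕ) - (n : ℤ)) = v j}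
      = {x : ℤ → Bool | ∀ i ∈ Finset.univ.image
          (fun j : Fin (2*n+3) => ((j : ℕ) : ℤ) - (n : ℤ)), x i = emb n v i} := by
    ext x
    simp only [Set.mem_setOf_eq, Finset.mem_image, Finset.mem_univ, true_and]
    constructor
    · rintro h i ⟨j, rfl⟩
      have he : emb n v (((j : ℕ) : ℤ) - (n : ℤ)) = v j := by
        have := emb_val n v (j : ℕ) j.isLt
        rw [show -(n:ℤ) + ((j:ℕ):ℤ) = ((j:ℕ):ℤ) - (n:ℤ) by ring] at this
        rw [this]
      rw [he]
      exact h j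
    · intro h j
      have he : emb n v (((j : ℕ) : ℤ) - (n : ℤ)) = v j := by
        have := emb_val n v (j : ℕ) j.isLt
        rw [show -(n:ℤ) + ((j:ℕ):ℤ) = ((j:ℕ):ℤ) - (n:ℤ) by ring] at this
        rw [this]
      rw [← he]
      exact h _ ⟨j, rfl⟩
  rw [hset, hber]
  have hprod : ∀ i ∈ Finset.univ.image
      (fun j : Fin (2*n+3) => ((j : ℕ) : ℤ) - (n : ℤ)),
      (if emb n v i then ENNReal.ofReal (1/2) else ENNReal.ofReal (1 - 1/2))
        = ENNReal.ofReal (1/2) := by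
    intro i _
    norm_num
  rw [Finset.prod_congr rfl hprod, Finset.prod_const,
    Finset.card_image_of_injective _ hinj]
  simp

lemma measure_block {μ : Measure (ℤ → Bool)} (hber : IsBernoulli (1/2) μ)
    (n : ℕ) (b : List Bool) (hb : b.length ≤ 3) :
    μ ((eca rule184)^[n] ⁻¹' cylinder b)
      = (cnt n b : ENNReal) * (ENNReal.ofReal (1/2))^(2*n+3) := by
  rw [preimage_eq n b hb]
  rw [measure_biUnion_finset]
  · rw [Finset.sum_congr rfl (fun v _ => measure_cell hber n v), Finset.sum_const,
      nsmul_eq_mul]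
    congr 1
    rw [cnt, Nat.card_eq_fintype_card, Fintype.card_subtype]
  · intro v hv w hw hvw
    apply Set.disjoint_left.mpr
    intro x hx hx'
    apply hvw
    funext j
    rw [← hx j, ← hx' j]
  · intro v _
    have : {x : ℤ → Bool | ∀ j : Fin (2*n+3), x ((j : ℕ) - (n : ℤ)) = v j}
        = ⋂ j : Fin (2*n+3),
            (fun x : ℤ → Bool => x ((j : ℕ) - (n : ℤ))) ⁻¹' {v j} := by
      ext x
      simp [Set.mem_iInter]
    rw [this]
    apply MeasurableSet.iInter
    intro j
    exact (measurable_pi_apply _) (measurableSet_singleton _)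

/-- exact block probabilities (short block representation, lengths ≤ 3)
for ECA rule 184 started from the symmetric Bernoulli measure `μ_{1/2}`. -/
theorem rule184_block_probabilities_half
    (μ : Measure (ℤ → Bool)) (hprob : IsProbabilityMeasure μ)
    (hber : IsBernoulli (1 / 2) μ) :
    ∀ n : ℕ,
      (μ ((eca rule184)^[n] ⁻¹' cylinder [false])).toReal = 1 / 2 ∧
      (μ ((eca rule184)^[n] ⁻¹' cylinder [false, false])).toReal
          = (2 : ℝ) ^ (-2 - 2 * (n : ℤ)) * (Nat.choose (2 * n + 1) (n + 1) : ℝ) ∧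
      (μ ((eca rule184)^[n] ⁻¹' cylinder [false, false, false])).toReal
          = (2 : ℝ) ^ (-2 * (n : ℤ) - 3) * (Nat.choose (2 * n + 1) (n + 1) : ℝ) ∧
      (μ ((eca rule184)^[n] ⁻¹' cylinder [false, true, false])).toReal
          = 1 / 2 - 3 * (2 : ℝ) ^ (-3 - 2 * (n : ℤ)) * (Nat.choose (2 * n + 1) (n + 1) : ℝ) := by
  intro n
  have key : ∀ (b : List Bool), b.length ≤ 3 →
      (μ ((eca rule184)^[n] ⁻¹' cylinder b)).toReal
        = (cnt n b : ℝ) * (1/2 : ℝ)^(2*n+3) := by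
    intro b hb
    rw [measure_block hber n b hb]
    rw [ENNReal.toReal_mul, ENNReal.toReal_pow, ENNReal.toReal_ofReal (by norm_num)]
    norm_num
  have hC0 : (0:ℝ) < 2 := by norm_num
  have c1 := cnt_false n
  have c2 := cnt_ff n
  have c3 := cnt_fff n
  have c4 : cnt n [false, true, false] + 3 * (2*n+1).choose (n+1) = 2^(2*n+2) := by
    have p3 := cnt_part3 n
    have p2 := cnt_part2 n
    have sw := cnt_swap n
    omega
  have hps : (2:ℝ)^(2*n+3) = (2:ℝ)^(2*n+2) * 2 := by rw [pow_succ]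
  have hpow2 : (2:ℝ)^(2*n+2) ≠ 0 := by positivity
  refine ⟨?_, ?_, ?_, ?_⟩
  · rw [key [false] (by norm_num), c1]
    push_cast
    rw [one_div, inv_pow, hps]
    field_simp
  · rw [key [false, false] (by norm_num), c2]
    have hz : (2:ℝ)^(-2-2*(n:ℤ)) = ((2:ℝ)^(2*n+2 : ℕ))⁻¹ := by
      rw [show (-2-2*(n:ℤ)) = -((2*n+2 : ℕ) : ℤ) by push_cast; ring, zpow_neg,
        zpow_natCast]
    rw [hz]
    push_cast
    rw [one_div, inv_pow, hps]
    field_simp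
  · rw [key [false, false, false] (by norm_num), c3]
    have hz : (2:ℝ)^(-2*(n:ℤ)-3) = ((2:ℝ)^(2*n+3 : ℕ))⁻¹ := by
      rw [show (-2*(n:ℤ)-3) = -((2*n+3 : ℕ) : ℤ) by push_cast; ring, zpow_neg,
        zpow_natCast]
    rw [hz]
    push_cast
    rw [one_div, inv_pow]
    ring
  · rw [key [false, true, false] (by norm_num)]
    have hz : (2:ℝ)^(-3-2*(n:ℤ)) = ((2:ℝ)^(2*n+3 : ℕ))⁻¹ := by
      rw [show (-3-2*(n:ℤ)) = -((2*n+3 : ℕ) : ℤ) by push_cast; ring, zpow_neg,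
        zpow_natCast]
    rw [hz]
    have c4' : (cnt n [false, true, false] : ℝ)
        = 2^(2*n+2) - 3*((2*n+1).choose (n+1) : ℝ) := by
      have h := congrArg (fun m : ℕ => (m : ℝ)) c4
      push_cast at h
      linarith
    rw [c4']
    rw [one_div, inv_pow, hps]
    field_simp
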